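/- Let i_n denote the number of UC-equivalence classes of paths of length n in ℰ. Then i_0 = 1, i_1 = 0, i_2 = 1, i_3 = 1, i_4 = 2, i_5 = 4, i_6 = 5, and i_n = 2i_{n−1} − i_{n−2} + i_{n−3} − i_{n−4} + i_{n−5} − i_{n−6} + i_{n−7} for all n ≥ 7. -/

import Mathlib

/-- Steps of a Dyck path with catastrophes: up-step `U`, down-step `D`,
and catastrophe step `C k` of size `k` (valid paths only use `k ≥ 2`). -/
inductive Step where
  | U : Step
  | D : Step
  | C : ℕ → Step
  deriving DecidableEq

/-- The vertical displacement of a step. -/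
def Step.val : Step → ℤ
  | .U => 1
  | .D => -1
  | .C k => -(k : ℤ)

/-- The height (ordinate) of the path after its first `i` steps. -/
def hgt (P : List Step) (i : ℕ) : ℤ := ((P.take i).map Step.val).sum

/-- `InE P` means `P` is a Dyck path with catastrophes (a member of ℰ):
it stays at height ≥ 0, ends on the x-axis, and every catastrophe step
`C k` has `k ≥ 2` and starts at height `k` (hence ends on the x-axis). -/
def InE (P : List Step) : Prop :=
  (∀ i, 0 ≤ hgt P i) ∧ hgt P P.length = 0 ∧
    ∀ i k, P[i]? = some (Step.C k) → 2 ≤ k ∧ hgt P i = (k : ℤ)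

/-- `(UD)^k`. -/
def UDpow (k : ℕ) : List Step := (List.replicate k [Step.U, Step.D]).flatten

/-- `(DU)^k`. -/
def DUpow (k : ℕ) : List Step := (List.replicate k [Step.D, Step.U]).flatten

/-- `U^k`. -/
def Upow (k : ℕ) : List Step := List.replicate k Step.U

/-- `C_s` with the convention `C_1 = D`. -/
def cfin (s : ℕ) : Step := if s = 1 then Step.D else Step.C s

/-- Test whether a step is a catastrophe step. -/
def isCatB : Step → Bool
  | .C _ => true
  | _ => false

/-- The number of catastrophe steps in a path. -/
def catCount (P : List Step) : ℕ := P.countP isCatB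

/-- The number of equivalence classes, for the equivalence `E`, of paths of
length `n` in ℰ. -/
noncomputable def nClasses (E : List Step → List Step → Prop) (n : ℕ) : ℕ :=
  Nat.card (Quot (fun P Q : {P : List Step // InE P ∧ P.length = n} => E P.1 Q.1))

/-- Two paths are `UC`-equivalent when, for every `k ≥ 2`, the occurrences of
the pattern `U C_k` appear at the same positions in both paths. -/
def UCEquiv (P Q : List Step) : Prop :=
  ∀ k, 2 ≤ k → ∀ i : ℕ,
    (P[i]? = some Step.U ∧ P[i + 1]? = some (Step.C k)) ↔
    (Q[i]? = some Step.U ∧ Q[i + 1]? = some (Step.C k))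


/-- the pattern `U C_k` occurs at position `i`. -/
def pat (P : List Step) (i k : ℕ) : Prop :=
  P[i]? = some Step.U ∧ P[i+1]? = some (Step.C k)

lemma hgt_zero (P : List Step) : hgt P 0 = 0 := rfl

lemma hgt_succ (P : List Step) (i : ℕ) :
    hgt P (i+1) = hgt P i + (P[i]?.elim 0 Step.val) := by
  unfold hgt
  rw [List.take_succ, List.map_append, List.sum_append]
  cases h : P[i]? <;> simp [h]

lemma step_val_le_one (s : Step) : s.val ≤ 1 := by
  cases s with
  | U => simp [Step.val]
  | D => simp [Step.val]
  | C k => simp only [Step.val]; omega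

lemma hgt_sub_le (P : List Step) (a b : ℕ) (h : a ≤ b) :
    hgt P b - hgt P a ≤ (b : ℤ) - a := by
  induction b with
  | zero =>
    have : a = 0 := by omega
    subst this; simp
  | succ n ih =>
    rcases Nat.lt_or_ge a (n+1) with hlt | hge
    · have := ih (by omega)
      rw [hgt_succ]
      have hv : (P[n]?.elim 0 Step.val) ≤ 1 := by
        cases h : P[n]? with
        | none => simp
        | some s => simpa using step_val_le_one s
      push_cast
      omega
    · have : a = n + 1 := by omega
      subst this; omega

lemma hgt_le (P : List Step) (i : ℕ) : hgt P i ≤ i := by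
  have := hgt_sub_le P 0 i (by omega)
  rw [hgt_zero] at this; omega

lemma hgt_length_le (P : List Step) {i : ℕ} (h : P.length ≤ i) :
    hgt P i = hgt P P.length := by
  unfold hgt
  rw [List.take_of_length_le h, List.take_length]

/-- parity of heights when there are no catastrophes among the first `b` steps -/
lemma hgt_parity (P : List Step) (b : ℕ) (hb : b ≤ P.length)
    (hnc : ∀ q < b, ∀ k, P[q]? ≠ some (Step.C k)) :
    Even ((b : ℤ) - hgt P b) := by
  induction b with
  | zero => simp [hgt_zero]
  | succ n ih =>
    have h1 : Even ((n : ℤ) - hgt P n) := ih (by omega) (fun q hq k => hnc q (by omega) k)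
    have hn : n < P.length := by omega
    have hsome : P[n]? = some P[n] := List.getElem?_eq_getElem hn
    rw [hgt_succ, hsome]
    cases hPn : P[n] with
    | U =>
      simp only [Option.elim, Step.val]
      obtain ⟨c, hc⟩ := h1; exact ⟨c, by push_cast; omega⟩
    | D =>
      simp only [Option.elim, Step.val]
      obtain ⟨c, hc⟩ := h1; exact ⟨c+1, by push_cast; omega⟩
    | C k =>
      exact absurd (hsome.trans (by rw [hPn])) (hnc n (by omega) k)

/-- The key segment lemma: a prefix with no UC-patterns strictly inside,
  ending at height `h`, has length `≥ h` and (same parity as `h`, or `≥ h + 5`). -/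
lemma seg_bound (P : List Step) (hP : InE P) (b h : ℕ) (hb : b ≤ P.length)
    (hh : hgt P b = (h : ℤ)) (hnp : ∀ i k, i + 1 < b → ¬ pat P i k) :
    h ≤ b ∧ ((b - h) % 2 = 0 ∨ h + 5 ≤ b) := by
  obtain ⟨hpos, hend, hcat⟩ := hP
  have hhb : h ≤ b := by have := hgt_le P b; omega
  refine ⟨hhb, ?_⟩
  by_cases hc : ∃ q < b, ∃ k, P[q]? = some (Step.C k)
  · right
    obtain ⟨q, hq, k, hk⟩ := hc
    obtain ⟨hk2, hkh⟩ := hcat q k hk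
    have hql : q < P.length := (List.getElem?_eq_some_iff.mp hk).1
    -- q ≥ 1 since hgt P q = k ≥ 2
    have hq2 : 2 ≤ q := by have := hgt_le P q; omega
    have hq1l : q - 1 < P.length := by omega
    have hsome : P[q-1]? = some P[q-1] := List.getElem?_eq_getElem hq1l
    have hqe : q - 1 + 1 = q := by omega
    have hstep : hgt P q = hgt P (q-1) + (P[q-1]?.elim 0 Step.val) := by
      conv_lhs => rw [← hqe]
      exact hgt_succ P (q-1)
    have hD : P[q-1] = Step.D := by
      cases hPq : P[q-1] with
      | U =>
        exact absurd (hnp (q-1) k (by omega) ⟨by rw [hsome, hPq], by rw [hqe, hk]⟩) (fun h => h)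
      | D => rfl
      | C k' =>
        obtain ⟨_, hkh'⟩ := hcat (q-1) k' (hsome.trans (by rw [hPq]))
        rw [hsome, hPq] at hstep
        simp only [Option.elim, Step.val] at hstep
        omega
    have hq1h : hgt P (q-1) = (k : ℤ) + 1 := by
      rw [hsome, hD] at hstep
      simp only [Option.elim, Step.val] at hstep
      omega
    have hq4 : 4 ≤ q := by
      have := hgt_le P (q-1); omega
    have hq1z : hgt P (q+1) = 0 := by
      rw [hgt_succ, hk]
      simp only [Option.elim, Step.val]; omega
    have hqb : q + 1 ≤ b := by omega
    have := hgt_sub_le P (q+1) b hqb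
    rw [hq1z, hh] at this
    omega
  · left
    push_neg at hc
    have := hgt_parity P b hb (fun q hq k => hc q hq k)
    rw [hh] at this
    obtain ⟨c, hcc⟩ := this
    omega

-- admissible data
def okk (L h : ℕ) : Prop :=
  (h ≤ L ∧ (L - h) % 2 = 0) ∨ (h + 5 ≤ L ∧ (L - h) % 2 = 1)

instance (L h : ℕ) : Decidable (okk L h) := by unfold okk; infer_instance

def Blk (p : ℕ × ℕ) : Prop := 1 ≤ p.2 ∧ okk p.1 p.2

instance (p : ℕ × ℕ) : Decidable (Blk p) := by unfold Blk; infer_instance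

def Adm (x : List (ℕ × ℕ) × ℕ) : Prop :=
  (∀ p ∈ x.1, Blk p) ∧ x.2 ≠ 1 ∧ x.2 ≠ 3

def total (x : List (ℕ × ℕ) × ℕ) : ℕ :=
  (x.1.map (fun p => p.1 + 2)).sum + x.2

def enc : List (ℕ × ℕ) → ℕ → ℕ → Prop
  | [], _, _ => False
  | (L, h) :: d, i, k => (i = L ∧ k = h + 1) ∨ (L + 2 ≤ i ∧ enc d (i - L - 2) k)

lemma enc_two {d : List (ℕ × ℕ)} (hd : ∀ p ∈ d, Blk p) {i k : ℕ} (he : enc d i k) : 2 ≤ k := by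
  induction d generalizing i with
  | nil => exact absurd he (by simp [enc])
  | cons p d ih =>
    obtain ⟨L, hh⟩ := p
    rcases he with ⟨hiL, hk⟩ | ⟨_, he'⟩
    · have := (hd (L, hh) (by simp)).1; omega
    · exact ih (fun q hq => hd q (by simp [hq])) he' 

lemma InE_drop (P : List Step) (hP : InE P) (m : ℕ) (hm : m ≤ P.length)
    (h0 : hgt P m = 0) : InE (P.drop m) := by
  obtain ⟨hpos, hend, hcat⟩ := hP
  have hgt_drop : ∀ j, hgt (P.drop m) j = hgt P (m + j) - hgt P m := by
    intro j
    unfold hgt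
    rw [List.take_add, List.map_append, List.sum_append]
    ring
  refine ⟨fun i => ?_, ?_, fun i k hik => ?_⟩
  · rw [hgt_drop, h0]; have := hpos (m + i); omega
  · rw [List.length_drop, hgt_drop, h0]
    have : m + (P.length - m) = P.length := by omega
    rw [this, hend]; ring
  · rw [List.getElem?_drop] at hik
    obtain ⟨h2, hh⟩ := hcat (m + i) k hik
    rw [hgt_drop, h0]
    constructor
    · exact h2
    · omega

/-- Every path in ℰ has admissible profile data. -/
lemma exists_data_aux : ∀ (n : ℕ) (P : List Step), P.length ≤ n → InE P →
    ∃ x : List (ℕ × ℕ) × ℕ, Adm x ∧ total x = P.length ∧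
      ∀ i k, pat P i k ↔ enc x.1 i k := by
  intro n
  induction n using Nat.strong_induction_on with
  | _ n ih =>
    intro P hlen hP
    by_cases hex : ∃ i, ∃ k, pat P i k
    · classical
      set p := Nat.find hex with hpdef
      have hp : ∃ k, pat P p k := Nat.find_spec hex
      have hmin : ∀ i < p, ¬ ∃ k, pat P i k := fun i hi => Nat.find_min hex hi
      obtain ⟨k, hU, hC⟩ := hp
      obtain ⟨hk2, hkh⟩ := hP.2.2 (p+1) k hC
      have hplen : p + 1 < P.length := (List.getElem?_eq_some_iff.mp hC).1
      have hgtp : hgt P p = (k : ℤ) - 1 := by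
        have := hgt_succ P p
        rw [hU] at this
        simp only [Option.elim, Step.val] at this
        omega
      have hgtp2 : hgt P (p+2) = 0 := by
        have := hgt_succ P (p+1)
        rw [hC, show p+1+1 = p+2 by omega] at this
        simp only [Option.elim, Step.val] at this
        omega
      have hsb := seg_bound P hP p (k-1) (by omega)
        (by rw [hgtp]; omega)
        (fun i k' hi hpik => hmin i (by omega) ⟨k', hpik⟩)
      have hok : okk p (k-1) := by unfold okk; omega
      set Q := P.drop (p+2) with hQdef
      have hQ : InE Q := InE_drop P hP (p+2) (by omega) hgtp2
      have hQlen : Q.length = P.length - (p+2) := by simp [hQdef]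
      obtain ⟨⟨d', t'⟩, ⟨hbl, ht1, ht3⟩, htot, hpat⟩ :=
        ih Q.length (by omega) Q (le_refl _) hQ
      have hQel : ∀ j, Q[j]? = P[p+2+j]? := fun j => List.getElem?_drop
      refine ⟨((p, k-1) :: d', t'), ⟨?_, ht1, ht3⟩, ?_, ?_⟩
      · intro q hq
        rcases List.mem_cons.mp hq with rfl | hq'
        · exact ⟨by omega, hok⟩
        · exact hbl q hq'
      · simp only [total, List.map_cons, List.sum_cons] at htot ⊢
        omega
      · intro i k'
        rcases Nat.lt_trichotomy i p with hip | rfl | hip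
        · constructor
          · intro hpik; exact absurd ⟨k', hpik⟩ (hmin i hip)
          · rintro (⟨rfl, -⟩ | ⟨hle, -⟩) <;> omega
        · constructor
          · rintro ⟨-, hC'⟩
            rw [hC] at hC'
            have : k' = k := by cases hC'; rfl
            exact Or.inl ⟨rfl, by omega⟩
          · rintro (⟨-, rfl⟩ | ⟨hle, -⟩)
            · have hkk : k - 1 + 1 = k := by omega
              rw [hkk]
              exact ⟨hU, hC⟩
            · omega
        · rcases Nat.lt_or_ge i (p+2) with hip2 | hip2
          · have hie : i = p + 1 := by omega
            subst hie
            constructor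
            · rintro ⟨h1, -⟩
              rw [hC] at h1
              cases h1
            · rintro (⟨h1, -⟩ | ⟨hle, -⟩) <;> omega
          · have h1 : P[i]? = Q[i - (p+2)]? := by rw [hQel]; congr 1; omega
            have h2 : P[i+1]? = Q[i - (p+2) + 1]? := by rw [hQel]; congr 1; omega
            constructor
            · rintro ⟨hu, hc⟩
              refine Or.inr ⟨by omega, ?_⟩
              have : i - p - 2 = i - (p + 2) := by omega
              rw [this]
              exact (hpat _ _).mp ⟨h1 ▸ hu, h2 ▸ hc⟩
            · rintro (⟨rfl, -⟩ | ⟨hle, he⟩)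
              · omega
              · have : i - p - 2 = i - (p + 2) := by omega
                rw [this] at he
                obtain ⟨hu, hc⟩ := (hpat _ _).mpr he
                exact ⟨h1 ▸ hu, h2 ▸ hc⟩
    · push_neg at hex
      refine ⟨([], P.length), ⟨by simp, ?_⟩, by simp [total], ?_⟩
      · have hsb := seg_bound P hP P.length 0 (le_refl _)
          (by rw [hP.2.1]; simp) (fun i k _ => hex i k)
        constructor <;> omega
      · intro i k
        simp only [enc, iff_false]
        exact hex i k

lemma exists_data (P : List Step) (hP : InE P) :
    ∃ x : List (ℕ × ℕ) × ℕ, Adm x ∧ total x = P.length ∧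
      ∀ i k, pat P i k ↔ enc x.1 i k :=
  exists_data_aux P.length P (le_refl _) hP

/-- data is determined by `enc` and `total`. -/
lemma enc_inj : ∀ (d1 : List (ℕ × ℕ)) (t1 : ℕ) (d2 : List (ℕ × ℕ)) (t2 : ℕ),
    total (d1, t1) = total (d2, t2) →
    (∀ i k, enc d1 i k ↔ enc d2 i k) → d1 = d2 ∧ t1 = t2 := by
  intro d1
  induction d1 with
  | nil =>
    intro t1 d2 t2 htot henc
    cases d2 with
    | nil => simp [total] at htot; exact ⟨rfl, htot⟩
    | cons p d2 =>
      obtain ⟨L, h⟩ := p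
      have := (henc L (h+1)).mpr (Or.inl ⟨rfl, rfl⟩)
      exact absurd this (by simp [enc])
  | cons p d1 ih =>
    intro t1 d2 t2 htot henc
    obtain ⟨L1, h1⟩ := p
    cases d2 with
    | nil =>
      have := (henc L1 (h1+1)).mp (Or.inl ⟨rfl, rfl⟩)
      exact absurd this (by simp [enc])
    | cons q d2 =>
      obtain ⟨L2, h2⟩ := q
      have e1 := (henc L1 (h1+1)).mp (Or.inl ⟨rfl, rfl⟩)
      have e2 := (henc L2 (h2+1)).mpr (Or.inl ⟨rfl, rfl⟩)
      have hLL : L1 = L2 := by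
        rcases e1 with ⟨he, -⟩ | ⟨hle, -⟩ <;> rcases e2 with ⟨he', -⟩ | ⟨hle', -⟩ <;> omega
      subst hLL
      have hhh : h1 = h2 := by
        rcases e1 with ⟨-, he⟩ | ⟨hle, -⟩
        · omega
        · omega
      subst hhh
      have henc' : ∀ i k, enc d1 i k ↔ enc d2 i k := by
        intro i k
        have := henc (i + L1 + 2) k
        simp only [enc] at this
        have harith : i + L1 + 2 - L1 - 2 = i := by omega
        rw [harith] at this
        constructor
        · intro h
          rcases this.mp (Or.inr ⟨by omega, h⟩) with ⟨he, -⟩ | ⟨-, h'⟩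
          · omega
          · exact h'
        · intro h
          rcases this.mpr (Or.inr ⟨by omega, h⟩) with ⟨he, -⟩ | ⟨-, h'⟩
          · omega
          · exact h'
      have htot' : total (d1, t1) = total (d2, t2) := by
        simp only [total, List.map_cons, List.sum_cons] at htot ⊢
        omega
      obtain ⟨hd, ht⟩ := ih t1 d2 t2 htot' henc'
      exact ⟨by rw [hd], ht⟩
-- Segment validity predicate
def sumVal (s : List Step) : ℤ := (s.map Step.val).sum

def Seg (s : List Step) (a b : ℤ) : Prop :=
  sumVal s = b - a ∧ (∀ i, 0 ≤ a + hgt s i) ∧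
    ∀ i k, s[i]? = some (Step.C k) → 2 ≤ k ∧ a + hgt s i = (k : ℤ)

lemma hgt_eq_sumVal (s : List Step) : hgt s s.length = sumVal s := by
  unfold hgt sumVal; rw [List.take_length]

lemma Seg.nonneg_left {s : List Step} {a b : ℤ} (h : Seg s a b) : 0 ≤ a := by
  have := h.2.1 0; rw [hgt_zero] at this; omega

lemma Seg.nonneg_right {s : List Step} {a b : ℤ} (h : Seg s a b) : 0 ≤ b := by
  have h1 := h.1
  have := h.2.1 s.length; rw [hgt_eq_sumVal] at this; omega

lemma Seg_nil {a : ℤ} (ha : 0 ≤ a) : Seg [] a a := by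
  refine ⟨by simp [sumVal], fun i => ?_, fun i k h => by simp at h⟩
  simp [hgt]; omega

lemma hgt_cons (x : Step) (s : List Step) (i : ℕ) :
    hgt (x :: s) (i + 1) = x.val + hgt s i := by
  unfold hgt
  rw [List.take_succ_cons, List.map_cons, List.sum_cons]

lemma Seg_cons_U {s : List Step} {a b : ℤ} (ha : 0 ≤ a) (h : Seg s (a+1) b) :
    Seg (Step.U :: s) a b := by
  obtain ⟨h1, h2, h3⟩ := h
  refine ⟨?_, fun i => ?_, fun i k hik => ?_⟩
  · simp only [sumVal, List.map_cons, List.sum_cons] at h1 ⊢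
    simp [Step.val]; omega
  · cases i with
    | zero => rw [hgt_zero]; omega
    | succ j => rw [hgt_cons]; have := h2 j; simp [Step.val]; omega
  · cases i with
    | zero => simp at hik
    | succ j =>
      rw [hgt_cons]
      have := h3 j k (by simpa using hik)
      simp only [Step.val]
      omega

lemma Seg_cons_D {s : List Step} {a b : ℤ} (ha : 1 ≤ a) (h : Seg s (a-1) b) :
    Seg (Step.D :: s) a b := by
  obtain ⟨h1, h2, h3⟩ := h
  refine ⟨?_, fun i => ?_, fun i k hik => ?_⟩
  · simp only [sumVal, List.map_cons, List.sum_cons] at h1 ⊢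
    simp [Step.val]; omega
  · cases i with
    | zero => rw [hgt_zero]; omega
    | succ j => rw [hgt_cons]; have := h2 j; simp [Step.val]; omega
  · cases i with
    | zero => simp at hik
    | succ j =>
      rw [hgt_cons]
      have := h3 j k (by simpa using hik)
      simp only [Step.val]
      omega

lemma Seg_cons_C {s : List Step} {k : ℕ} {a b : ℤ} (hk : 2 ≤ k) (ha : a = (k : ℤ))
    (h : Seg s 0 b) : Seg (Step.C k :: s) a b := by
  obtain ⟨h1, h2, h3⟩ := h
  refine ⟨?_, fun i => ?_, fun i k' hik => ?_⟩
  · simp only [sumVal, List.map_cons, List.sum_cons] at h1 ⊢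
    simp [Step.val]; omega
  · cases i with
    | zero => rw [hgt_zero]; omega
    | succ j => rw [hgt_cons]; have := h2 j; simp [Step.val]; omega
  · cases i with
    | zero =>
      simp only [List.getElem?_cons_zero, Option.some.injEq, Step.C.injEq] at hik
      subst hik
      rw [hgt_zero]; exact ⟨hk, by omega⟩
    | succ j =>
      rw [hgt_cons]
      have := h3 j k' (by simpa using hik)
      simp only [Step.val]
      omega

lemma hgt_append_le (s t : List Step) (i : ℕ) (h : i ≤ s.length) :
    hgt (s ++ t) i = hgt s i := by
  unfold hgt; rw [List.take_append_of_le_length h]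

lemma hgt_append_add (s t : List Step) (j : ℕ) :
    hgt (s ++ t) (s.length + j) = sumVal s + hgt t j := by
  unfold hgt sumVal
  rw [List.take_append, List.map_append, List.sum_append]
  rw [List.take_of_length_le (Nat.le_add_right _ _), Nat.add_sub_cancel_left]

lemma Seg.append {s t : List Step} {a b c : ℤ} (hs : Seg s a c) (ht : Seg t c b) :
    Seg (s ++ t) a b := by
  obtain ⟨s1, s2, s3⟩ := hs
  obtain ⟨t1, t2, t3⟩ := ht
  refine ⟨?_, fun i => ?_, fun i k hik => ?_⟩
  · simp only [sumVal, List.map_append, List.sum_append] at *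
    omega
  · rcases le_or_gt i s.length with hi | hi
    · rw [hgt_append_le s t i hi]; exact s2 i
    · have : i = s.length + (i - s.length) := by omega
      rw [this, hgt_append_add]
      have := t2 (i - s.length)
      omega
  · rw [List.getElem?_append] at hik
    split at hik
    · rw [hgt_append_le s t i (by omega)]
      exact s3 i k hik
    · rename_i hns
      have hi : i = s.length + (i - s.length) := by omega
      rw [hi, hgt_append_add]
      have := t3 (i - s.length) k hik
      constructor
      · exact this.1
      · omega

lemma UDpow_succ (m : ℕ) : UDpow (m+1) = Step.U :: Step.D :: UDpow m := by
  simp [UDpow, List.replicate_succ]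

lemma Upow_succ (m : ℕ) : Upow (m+1) = Step.U :: Upow m := by
  simp [Upow, List.replicate_succ]

lemma Seg_UDpow (m : ℕ) {a : ℤ} (ha : 0 ≤ a) : Seg (UDpow m) a a := by
  induction m with
  | zero => exact Seg_nil ha
  | succ n ih =>
    rw [UDpow_succ]
    exact Seg_cons_U ha (Seg_cons_D (by omega) (by simpa using ih))

lemma Seg_Upow (h : ℕ) {a : ℤ} (ha : 0 ≤ a) : Seg (Upow h) a (a + h) := by
  induction h generalizing a with
  | zero => simpa [Upow] using Seg_nil ha
  | succ n ih =>
    have harith : a + ((n : ℤ) + 1) = (a + 1) + (n : ℤ) := by ring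
    rw [Upow_succ]
    apply Seg_cons_U ha
    push_cast
    rw [harith]
    exact ih (by omega)

def gad : List Step := [Step.U, Step.U, Step.U, Step.D, Step.C 2]

lemma Seg_gad : Seg gad 0 0 := by
  apply Seg_cons_U (by norm_num)
  apply Seg_cons_U (by norm_num)
  apply Seg_cons_U (by norm_num)
  apply Seg_cons_D (by norm_num)
  apply Seg_cons_C (by norm_num) (by norm_num)
  exact Seg_nil (by norm_num)

def pseg (L h : ℕ) : List Step :=
  if (L - h) % 2 = 0 then UDpow ((L-h)/2) ++ Upow h
  else gad ++ UDpow ((L-h-5)/2) ++ Upow h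

lemma Seg_pseg (L h : ℕ) : Seg (pseg L h) 0 (h : ℤ) := by
  unfold pseg
  split
  · exact (Seg_UDpow _ le_rfl).append (by simpa using Seg_Upow h le_rfl)
  · exact (Seg_gad.append (Seg_UDpow _ le_rfl)).append (by simpa using Seg_Upow h le_rfl)

lemma len_UDpow (m : ℕ) : (UDpow m).length = 2 * m := by
  induction m with
  | zero => rfl
  | succ n ih => rw [UDpow_succ]; simp at ih ⊢; omega

lemma len_Upow (h : ℕ) : (Upow h).length = h := by simp [Upow]

lemma len_pseg (L h : ℕ) (hok : okk L h) : (pseg L h).length = L := by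
  unfold pseg
  rcases hok with ⟨h1, h2⟩ | ⟨h1, h2⟩
  · rw [if_pos h2]
    simp [len_UDpow, len_Upow]
    omega
  · rw [if_neg (by omega)]
    simp [len_UDpow, len_Upow, gad]
    omega

-- canonical path
def cp : List (ℕ × ℕ) → ℕ → List Step
  | [], t => pseg t 0
  | (L, h) :: d, t => pseg L h ++ ([Step.U, Step.C (h+1)] ++ cp d t)

lemma okk_tail {t : ℕ} (h1 : t ≠ 1) (h3 : t ≠ 3) : okk t 0 := by
  unfold okk; omega

lemma len_cp (d : List (ℕ × ℕ)) (t : ℕ) (hadm : Adm (d, t)) :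
    (cp d t).length = total (d, t) := by
  induction d with
  | nil =>
    simp only [cp, total, List.map_nil, List.sum_nil, Nat.zero_add]
    exact len_pseg t 0 (okk_tail hadm.2.1 hadm.2.2)
  | cons p d ih =>
    obtain ⟨L, h⟩ := p
    have hblk := hadm.1 (L, h) (by simp)
    have ih' := ih ⟨fun q hq => hadm.1 q (by simp [hq]), hadm.2.1, hadm.2.2⟩
    simp only [total] at ih'
    show (pseg L h ++ ([Step.U, Step.C (h+1)] ++ cp d t)).length = _
    simp only [List.length_append, List.length_cons, List.length_nil, total,
      List.map_cons, List.sum_cons]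
    rw [len_pseg L h hblk.2]
    omega

lemma Seg_cp (d : List (ℕ × ℕ)) (t : ℕ) (hadm : Adm (d, t)) : Seg (cp d t) 0 0 := by
  induction d with
  | nil => simpa [cp] using Seg_pseg t 0
  | cons p d ih =>
    obtain ⟨L, h⟩ := p
    have hblk := hadm.1 (L, h) (by simp)
    have ih' := ih ⟨fun q hq => hadm.1 q (by simp [hq]), hadm.2.1, hadm.2.2⟩
    refine (Seg_pseg L h).append ?_
    have heq : [Step.U, Step.C (h+1)] ++ cp d t = Step.U :: Step.C (h+1) :: cp d t := rfl
    rw [heq]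
    apply Seg_cons_U (by positivity)
    apply Seg_cons_C (show 2 ≤ h + 1 by have := hblk.1; simp at this; omega) (by push_cast; ring)
    exact ih' 

lemma InE_cp (d : List (ℕ × ℕ)) (t : ℕ) (hadm : Adm (d, t)) : InE (cp d t) := by
  obtain ⟨h1, h2, h3⟩ := Seg_cp d t hadm
  refine ⟨fun i => by simpa using h2 i, ?_, fun i k hik => ?_⟩
  · rw [hgt_eq_sumVal]; omega
  · have := h3 i k hik; simpa using this
lemma mem_UDpow {x : Step} {m : ℕ} (h : x ∈ UDpow m) : x = Step.U ∨ x = Step.D := by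
  obtain ⟨l, hl, hx⟩ := List.mem_flatten.mp h
  rw [List.eq_of_mem_replicate hl] at hx
  rcases List.mem_cons.mp hx with h | h
  · exact Or.inl h
  · exact Or.inr (by simpa using h)

lemma mem_Upow {x : Step} {m : ℕ} (h : x ∈ Upow m) : x = Step.U :=
  List.eq_of_mem_replicate h

lemma getElem?_append_lt {α : Type*} {l₁ l₂ : List α} {n : ℕ} (h : n < l₁.length) :
    (l₁ ++ l₂)[n]? = l₁[n]? := by
  rw [List.getElem?_append]; exact if_pos h

lemma noPat_pseg (L h i k : ℕ) : ¬ pat (pseg L h) i k := by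
  unfold pseg
  split
  · rintro ⟨-, h2⟩
    have := List.mem_of_getElem? h2
    rcases List.mem_append.mp this with hm | hm
    · rcases mem_UDpow hm with h | h <;> exact Step.noConfusion h
    · exact Step.noConfusion (mem_Upow hm)
  · rw [List.append_assoc]
    rintro ⟨h1, h2⟩
    rcases le_or_gt 5 (i+1) with hge | hlt
    · rw [List.getElem?_append_right (by simp [gad]; omega)] at h2
      have := List.mem_of_getElem? h2
      rcases List.mem_append.mp this with hm | hm
      · rcases mem_UDpow hm with h | h <;> exact Step.noConfusion h
      · exact Step.noConfusion (mem_Upow hm)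
    · rw [getElem?_append_lt (by simp [gad]; omega)] at h2
      have hub : i < 4 := by omega
      interval_cases i
      · simp [gad] at h2
      · simp [gad] at h2
      · simp [gad] at h2
      · rw [getElem?_append_lt (by simp [gad])] at h1
        simp [gad] at h1

lemma pat_cp : ∀ (d : List (ℕ × ℕ)) (t : ℕ), Adm (d, t) →
    ∀ i k, pat (cp d t) i k ↔ enc d i k := by
  intro d
  induction d with
  | nil =>
    intro t _ i k
    exact iff_of_false (noPat_pseg t 0 i k) (fun hh => hh)
  | cons p d ih =>
    intro t hadm i k
    obtain ⟨L, h⟩ := p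
    have hblk := hadm.1 (L, h) (by simp)
    have hadm' : Adm (d, t) := ⟨fun q hq => hadm.1 q (by simp [hq]), hadm.2.1, hadm.2.2⟩
    have hlen : (pseg L h).length = L := len_pseg L h hblk.2
    show pat (pseg L h ++ ([Step.U, Step.C (h+1)] ++ cp d t)) i k ↔ _
    set B : List Step := [Step.U, Step.C (h+1)] with hB
    set R : List Step := cp d t with hR
    rcases lt_trichotomy (i+1) L with hc | hc | hc
    · -- pattern inside pseg : impossible
      constructor
      · rintro ⟨h1, h2⟩
        rw [getElem?_append_lt (by omega)] at h1 h2
        exact absurd ⟨h1, h2⟩ (noPat_pseg L h i k)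
      · rintro (⟨rfl, -⟩ | ⟨hle, -⟩) <;> omega
    · -- i+1 = L : next element is the U of the occurrence, not a C
      constructor
      · rintro ⟨-, h2⟩
        rw [List.getElem?_append_right (by omega)] at h2
        have : i + 1 - (pseg L h).length = 0 := by omega
        rw [this] at h2
        simp [hB] at h2
      · rintro (⟨rfl, -⟩ | ⟨hle, -⟩) <;> omega
    · -- i ≥ L
      have hiL : L ≤ i := by omega
      have e1 : (pseg L h ++ (B ++ R))[i]? = (B ++ R)[i - L]? := by
        rw [List.getElem?_append_right (by omega), hlen]
      have e2 : (pseg L h ++ (B ++ R))[i+1]? = (B ++ R)[i - L + 1]? := by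
        rw [List.getElem?_append_right (by omega), hlen]
        congr 1
        omega
      have hB0 : (B ++ R)[0]? = some Step.U := by
        rw [getElem?_append_lt (by simp [hB])]; simp [hB]
      have hB1 : (B ++ R)[1]? = some (Step.C (h+1)) := by
        rw [getElem?_append_lt (by simp [hB])]; simp [hB]
      rcases Nat.lt_or_ge (i - L) 2 with hj | hj
      · rcases Nat.lt_or_ge (i - L) 1 with hj0 | hj1
        · -- i = L : the occurrence
          have hi : i = L := by omega
          subst hi
          rw [show i - i = 0 from by omega] at e1
          rw [show i - i + 1 = 1 from by omega] at e2
          constructor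
          · rintro ⟨-, h2⟩
            rw [e2, hB1] at h2
            simp only [Option.some.injEq, Step.C.injEq] at h2
            exact Or.inl ⟨rfl, h2.symm⟩
          · rintro (⟨-, rfl⟩ | ⟨hle, -⟩)
            · exact ⟨by rw [e1, hB0], by rw [e2, hB1]⟩
            · omega
        · -- i = L + 1 : this position holds C (h+1), not U
          have hi : i = L + 1 := by omega
          subst hi
          rw [show L + 1 - L = 1 from by omega] at e1
          constructor
          · rintro ⟨h1, -⟩
            rw [e1, hB1] at h1
            exact Step.noConfusion (Option.some.inj h1)
          · rintro (⟨he, -⟩ | ⟨hle, -⟩) <;> omega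
      · -- i ≥ L + 2 : recurse
        have hBlen : B.length = 2 := by simp [hB]
        have f1 : (B ++ R)[i - L]? = R[i - L - 2]? := by
          rw [List.getElem?_append_right (by omega), hBlen]
        have f2 : (B ++ R)[i - L + 1]? = R[i - L - 2 + 1]? := by
          rw [List.getElem?_append_right (by omega)]
          congr 1
          omega
        constructor
        · rintro ⟨h1, h2⟩
          rw [e1, f1] at h1
          rw [e2, f2] at h2
          have := (ih t hadm' (i - L - 2) k).mp ⟨h1, h2⟩
          exact Or.inr ⟨by omega, this⟩
        · rintro (⟨rfl, -⟩ | ⟨hle, henc⟩)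
          · omega
          · have henc' : enc d (i - L - 2) k := henc
            obtain ⟨h1, h2⟩ := (ih t hadm' (i - L - 2) k).mpr henc'
            exact ⟨by rw [e1, f1]; exact h1, by rw [e2, f2]; exact h2⟩
lemma nClasses_eq_card (n : ℕ) :
    nClasses UCEquiv n = Nat.card {x : List (ℕ × ℕ) × ℕ // Adm x ∧ total x = n} := by
  set S := {P : List Step // InE P ∧ P.length = n}
  set r : S → S → Prop := fun P Q => UCEquiv P.1 Q.1 with hr
  have hrequiv : Equivalence r := by
    constructor
    · intro P k hk i; exact Iff.rfl
    · intro P Q h k hk i; exact (h k hk i).symm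
    · intro P Q Rr h1 h2 k hk i; exact (h1 k hk i).trans (h2 k hk i)
  have : nClasses UCEquiv n = Nat.card (Quot r) := rfl
  rw [this]
  refine (Nat.card_eq_of_bijective
    (fun x : {x : List (ℕ × ℕ) × ℕ // Adm x ∧ total x = n} =>
      Quot.mk r ⟨cp x.1.1 x.1.2, InE_cp _ _ x.2.1,
        by rw [len_cp _ _ x.2.1]; exact x.2.2⟩) ⟨?_, ?_⟩).symm
  · -- injective
    intro x y hxy
    have hEG := Quot.eq.mp hxy
    have hrel := (hrequiv.eqvGen_iff).mp hEG
    have huc : UCEquiv (cp x.1.1 x.1.2) (cp y.1.1 y.1.2) := hrel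
    have henc : ∀ i k, enc x.1.1 i k ↔ enc y.1.1 i k := by
      intro i k
      rcases le_or_gt 2 k with hk | hk
      · rw [← pat_cp x.1.1 x.1.2 x.2.1 i k, ← pat_cp y.1.1 y.1.2 y.2.1 i k]
        exact huc k hk i
      · constructor
        · intro h; exact absurd (enc_two x.2.1.1 h) (by omega)
        · intro h; exact absurd (enc_two y.2.1.1 h) (by omega)
    have htot : total (x.1.1, x.1.2) = total (y.1.1, y.1.2) := by
      rw [Prod.mk.eta, Prod.mk.eta, x.2.2, y.2.2]
    obtain ⟨h1, h2⟩ := enc_inj x.1.1 x.1.2 y.1.1 y.1.2 htot henc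
    exact Subtype.ext (Prod.ext h1 h2)
  · -- surjective
    intro q
    induction q using Quot.ind with
    | _ P =>
      obtain ⟨P, hP, hlen⟩ := P
      obtain ⟨x, hadm, htot, hpat⟩ := exists_data P hP
      refine ⟨⟨x, hadm, by omega⟩, ?_⟩
      apply Quot.sound
      show UCEquiv (cp x.1 x.2) P
      intro k hk i
      exact (pat_cp x.1 x.2 hadm i k).trans (hpat i k).symm
def Bfin (n : ℕ) : Finset (ℕ × ℕ) :=
  (Finset.range (n+1) ×ˢ Finset.range (n+1)).filter (fun p => Blk p ∧ p.1 + 2 ≤ n)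

def Dfin : ℕ → Finset (List (ℕ × ℕ) × ℕ)
  | n =>
    (if n ≠ 1 ∧ n ≠ 3 then {([], n)} else ∅) ∪
      (Bfin n).attach.biUnion (fun p =>
        (Dfin (n - (p.1.1 + 2))).image (fun x => (p.1 :: x.1, x.2)))
  termination_by n => n
  decreasing_by
    have := (Finset.mem_filter.mp p.2).2.2
    omega

lemma mem_Bfin {n : ℕ} {p : ℕ × ℕ} :
    p ∈ Bfin n ↔ (p.1 < n + 1 ∧ p.2 < n + 1) ∧ Blk p ∧ p.1 + 2 ≤ n := by
  unfold Bfin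
  rw [Finset.mem_filter, Finset.mem_product, Finset.mem_range, Finset.mem_range]

lemma Blk_le {p : ℕ × ℕ} (h : Blk p) : p.2 ≤ p.1 := by
  obtain ⟨h1, h2⟩ := h
  unfold okk at h2
  omega

lemma mem_Dfin : ∀ (n : ℕ) (x : List (ℕ × ℕ) × ℕ),
    x ∈ Dfin n ↔ (Adm x ∧ total x = n) := by
  intro n
  induction n using Nat.strong_induction_on with
  | _ n ih =>
    intro x
    obtain ⟨d, t⟩ := x
    rw [Dfin]
    rw [Finset.mem_union, Finset.mem_biUnion]
    constructor
    · rintro (h | ⟨p, -, hmem⟩)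
      · split at h
        · rename_i hcond
          rw [Finset.mem_singleton] at h
          have h' : ([] : List (ℕ × ℕ)) = d ∧ n = t := by
            have := h.symm
            simpa [Prod.mk.injEq] using this
          obtain ⟨h1, h2⟩ := h' 
          refine ⟨⟨by simp [← h1], by omega, by omega⟩, ?_⟩
          simp [total, ← h1, ← h2]
        · simp at h
      · rw [Finset.mem_image] at hmem
        obtain ⟨y, hy, hxy⟩ := hmem
        have hp := mem_Bfin.mp p.2
        have hlt : n - (p.1.1 + 2) < n := by omega
        obtain ⟨⟨hbl, ht1, ht3⟩, htot⟩ := (ih _ hlt y).mp hy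
        simp only [Prod.mk.injEq] at hxy
        obtain ⟨h1, h2⟩ := hxy
        refine ⟨⟨?_, by omega, by omega⟩, ?_⟩
        · intro q hq
          rw [← h1] at hq
          rcases List.mem_cons.mp hq with rfl | hq'
          · exact hp.2.1
          · exact hbl q hq'
        · simp only [total] at htot ⊢
          rw [← h1, ← h2]
          simp only [List.map_cons, List.sum_cons]
          omega
    · rintro ⟨⟨hbl, ht1, ht3⟩, htot⟩
      cases d with
      | nil =>
        left
        have htn : t = n := by simpa [total] using htot
        rw [if_pos ⟨by omega, by omega⟩, Finset.mem_singleton, htn]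
      | cons p d' =>
        right
        have hblk : Blk p := hbl p (by simp)
        have hple : p.1 + 2 ≤ n := by
          simp only [total, List.map_cons, List.sum_cons] at htot
          omega
        have hpB : p ∈ Bfin n := by
          rw [mem_Bfin]
          have := Blk_le hblk
          exact ⟨⟨by omega, by omega⟩, hblk, hple⟩
        refine ⟨⟨p, hpB⟩, Finset.mem_attach _ _, ?_⟩
        rw [Finset.mem_image]
        have hlt : n - (p.1 + 2) < n := by omega
        refine ⟨(d', t), ?_, rfl⟩
        rw [ih _ hlt]
        refine ⟨⟨fun q hq => hbl q (by simp [hq]), by omega, by omega⟩, ?_⟩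
        simp only [total, List.map_cons, List.sum_cons] at htot ⊢
        omega

def g (n : ℕ) : ℕ := (Dfin n).card

lemma nClasses_eq_g (n : ℕ) : nClasses UCEquiv n = g n := by
  rw [nClasses_eq_card]
  have he : {x : List (ℕ × ℕ) × ℕ // Adm x ∧ total x = n} ≃ {x // x ∈ Dfin n} :=
    Equiv.subtypeEquivRight (fun x => (mem_Dfin n x).symm)
  rw [Nat.card_congr he, Nat.card_eq_fintype_card, Fintype.card_coe]; rfl

lemma g_rec (n : ℕ) : g n =
    (if n ≠ 1 ∧ n ≠ 3 then 1 else 0) + ∑ p ∈ Bfin n, g (n - (p.1 + 2)) := by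
  unfold g
  conv_lhs => rw [Dfin]
  rw [Finset.card_union_of_disjoint]
  · congr 1
    · split <;> simp
    · rw [Finset.card_biUnion]
      · rw [← Finset.sum_attach (Bfin n) (fun p => (Dfin (n - (p.1 + 2))).card)]
        apply Finset.sum_congr rfl
        intro p _
        apply Finset.card_image_of_injective
        intro a b hab
        simp only [Prod.mk.injEq, List.cons.injEq, true_and] at hab
        exact Prod.ext hab.1 hab.2
      · intro p _ q _ hpq
        simp only [Function.onFun]
        rw [Finset.disjoint_left]
        rintro a ha hb
        rw [Finset.mem_image] at ha hb
        obtain ⟨y, -, hy⟩ := ha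
        obtain ⟨z, -, hz⟩ := hb
        apply hpq
        apply Subtype.ext
        rw [← hz] at hy
        simp only [Prod.mk.injEq, List.cons.injEq] at hy
        exact hy.1.1
  · rw [Finset.disjoint_left]
    intro a ha hb
    split at ha
    · rw [Finset.mem_singleton] at ha
      rw [Finset.mem_biUnion] at hb
      obtain ⟨p, -, hmem⟩ := hb
      rw [Finset.mem_image] at hmem
      obtain ⟨y, -, hy⟩ := hmem
      rw [ha] at hy
      simp only [Prod.mk.injEq] at hy
      exact List.cons_ne_nil _ _ hy.1
    · simp at ha
def G2 (M : ℕ) : ℕ := ∑ u ∈ Finset.range (M+1), if (M - u) % 2 = 0 then g u else 0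
def G21 (M : ℕ) : ℕ := ∑ i ∈ Finset.range M, G2 i

lemma G21_zero : G21 0 = 0 := rfl
lemma G21_succ (M : ℕ) : G21 (M+1) = G21 M + G2 M := Finset.sum_range_succ _ _
lemma G2_zero : G2 0 = g 0 := by simp [G2]
lemma G2_one : G2 1 = g 1 := by
  unfold G2
  rw [Finset.sum_range_succ, Finset.sum_range_succ]
  norm_num

lemma G2_succ2 (M : ℕ) : G2 (M+2) = G2 M + g (M+2) := by
  unfold G2
  rw [Finset.sum_range_succ, Finset.sum_range_succ]
  rw [if_neg (by omega), if_pos (by omega)]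
  have hc : ∀ u ∈ Finset.range (M+1),
      (if (M+2-u) % 2 = 0 then g u else 0) = (if (M-u) % 2 = 0 then g u else 0) := by
    intro u hu
    rw [Finset.mem_range] at hu
    have : (M+2-u) % 2 = (M-u) % 2 := by omega
    rw [this]
  rw [Finset.sum_congr rfl hc]
  omega

lemma claim0 (n : ℕ) :
    ∑ p ∈ (Bfin n).filter (fun p => (p.1 - p.2) % 2 = 0), g (n - (p.1 + 2)) = G21 (n-2) := by
  have hG : G21 (n-2) = ∑ x ∈ (Finset.range (n-2)).sigma
      (fun i => (Finset.range (i+1)).filter (fun u => (i - u) % 2 = 0)), g x.2 := by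
    unfold G21
    rw [Finset.sum_sigma]
    apply Finset.sum_congr rfl
    intro i _
    unfold G2
    rw [Finset.sum_filter]
  rw [hG]
  apply Finset.sum_nbij' (i := fun p => (⟨n-2-p.2, n-2-p.1⟩ : (_ : ℕ) × ℕ))
    (j := fun x => ((n-2-x.2, n-2-x.1) : ℕ × ℕ))
  · intro p hp
    simp only [Finset.mem_filter, mem_Bfin, Blk, okk] at hp
    simp only [Finset.mem_sigma, Finset.mem_range, Finset.mem_filter]
    omega
  · intro x hx
    simp only [Finset.mem_sigma, Finset.mem_range, Finset.mem_filter] at hx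
    simp only [Finset.mem_filter, mem_Bfin, Blk, okk]
    omega
  · intro p hp
    simp only [Finset.mem_filter, mem_Bfin, Blk, okk] at hp
    obtain ⟨L, h⟩ := p
    simp only [Prod.mk.injEq]
    constructor <;> (simp only at hp; omega)
  · intro x hx
    simp only [Finset.mem_sigma, Finset.mem_range, Finset.mem_filter] at hx
    obtain ⟨a, b⟩ := x
    simp only at hx ⊢
    have e1 : n-2-(n-2-a) = a := by omega
    have e2 : n-2-(n-2-b) = b := by omega
    simp [e1, e2]
  · intro p hp
    simp only [Finset.mem_filter, mem_Bfin, Blk, okk] at hp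
    have : n - (p.1 + 2) = n - 2 - p.1 := by omega
    rw [this]

lemma claim1 (n : ℕ) :
    ∑ p ∈ (Bfin n).filter (fun p => ¬ (p.1 - p.2) % 2 = 0), g (n - (p.1 + 2)) = G21 (n-7) := by
  have hG : G21 (n-7) = ∑ x ∈ (Finset.range (n-7)).sigma
      (fun i => (Finset.range (i+1)).filter (fun u => (i - u) % 2 = 0)), g x.2 := by
    unfold G21
    rw [Finset.sum_sigma]
    apply Finset.sum_congr rfl
    intro i _
    unfold G2
    rw [Finset.sum_filter]
  rw [hG]
  apply Finset.sum_nbij' (i := fun p => (⟨n-7-p.2, n-2-p.1⟩ : (_ : ℕ) × ℕ))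
    (j := fun x => ((n-2-x.2, n-7-x.1) : ℕ × ℕ))
  · intro p hp
    simp only [Finset.mem_filter, mem_Bfin, Blk, okk] at hp
    simp only [Finset.mem_sigma, Finset.mem_range, Finset.mem_filter]
    omega
  · intro x hx
    simp only [Finset.mem_sigma, Finset.mem_range, Finset.mem_filter] at hx
    simp only [Finset.mem_filter, mem_Bfin, Blk, okk]
    omega
  · intro p hp
    simp only [Finset.mem_filter, mem_Bfin, Blk, okk] at hp
    obtain ⟨L, h⟩ := p
    simp only [Prod.mk.injEq]
    constructor <;> (simp only at hp; omega)
  · intro x hx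
    simp only [Finset.mem_sigma, Finset.mem_range, Finset.mem_filter] at hx
    obtain ⟨a, b⟩ := x
    simp only at hx ⊢
    have e1 : n-7-(n-7-a) = a := by omega
    have e2 : n-2-(n-2-b) = b := by omega
    simp [e1, e2]
  · intro p hp
    simp only [Finset.mem_filter, mem_Bfin, Blk, okk] at hp
    have : n - (p.1 + 2) = n - 2 - p.1 := by omega
    rw [this]

lemma gstar (n : ℕ) :
    g n = (if n ≠ 1 ∧ n ≠ 3 then 1 else 0) + G21 (n-2) + G21 (n-7) := by
  rw [g_rec]
  rw [← Finset.sum_filter_add_sum_filter_not (Bfin n) (fun p => (p.1 - p.2) % 2 = 0)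
    (fun p => g (n - (p.1 + 2)))]
  rw [claim0, claim1, add_assoc]
lemma gv0 : g 0 = 1 := by have h := gstar 0; norm_num [G21_zero] at h; exact h
lemma gv1 : g 1 = 0 := by have h := gstar 1; norm_num [G21_zero] at h; exact h
lemma gv2 : g 2 = 1 := by have h := gstar 2; norm_num [G21_zero] at h; exact h
lemma G2v0 : G2 0 = 1 := by rw [G2_zero, gv0]
lemma G2v1 : G2 1 = 0 := by rw [G2_one, gv1]
lemma G2v2 : G2 2 = 2 := by have h := G2_succ2 0; norm_num at h; rw [h, G2v0, gv2]
lemma G21v1 : G21 1 = 1 := by have h := G21_succ 0; norm_num at h; rw [h, G21_zero, G2v0]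
lemma gv3 : g 3 = 1 := by have h := gstar 3; norm_num [G21_zero, G21v1] at h; exact h
lemma G2v3 : G2 3 = 1 := by have h := G2_succ2 1; norm_num at h; rw [h, G2v1, gv3]
lemma G21v2 : G21 2 = 1 := by have h := G21_succ 1; norm_num at h; rw [h, G21v1, G2v1]
lemma gv4 : g 4 = 2 := by have h := gstar 4; norm_num [G21_zero, G21v2] at h; exact h
lemma G2v4 : G2 4 = 4 := by have h := G2_succ2 2; norm_num at h; rw [h, G2v2, gv4]
lemma G21v3 : G21 3 = 3 := by have h := G21_succ 2; norm_num at h; rw [h, G21v2, G2v2]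
lemma gv5 : g 5 = 4 := by have h := gstar 5; norm_num [G21_zero, G21v3] at h; exact h
lemma G2v5 : G2 5 = 5 := by have h := G2_succ2 3; norm_num at h; rw [h, G2v3, gv5]
lemma G21v4 : G21 4 = 4 := by have h := G21_succ 3; norm_num at h; rw [h, G21v3, G2v3]
lemma gv6 : g 6 = 5 := by have h := gstar 6; norm_num [G21_zero, G21v4] at h; exact h
lemma G2v6 : G2 6 = 9 := by have h := G2_succ2 4; norm_num at h; rw [h, G2v4, gv6]
lemma G21v5 : G21 5 = 8 := by have h := G21_succ 4; norm_num at h; rw [h, G21v4, G2v4]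
lemma gv7 : g 7 = 9 := by have h := gstar 7; norm_num [G21_zero, G21v5] at h; exact h
lemma G2v7 : G2 7 = 14 := by have h := G2_succ2 5; norm_num at h; rw [h, G2v5, gv7]
lemma G21v6 : G21 6 = 13 := by have h := G21_succ 5; norm_num at h; rw [h, G21v5, G2v5]
lemma gv8 : g 8 = 15 := by have h := gstar 8; norm_num [G21v1, G21v6] at h; exact h
lemma G21v7 : G21 7 = 22 := by have h := G21_succ 6; norm_num at h; rw [h, G21v6, G2v6]
lemma gv9 : g 9 = 24 := by have h := gstar 9; norm_num [G21v2, G21v7] at h; exact h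

/-- the order-8 recurrence `g n = g (n-1) + g (n-2) + g (n-8)` for `n ≥ 10`. -/
lemma A8 (m : ℕ) : g (m+10) = g (m+9) + g (m+8) + g (m+2) := by
  have s10 := gstar (m+10)
  have s9 := gstar (m+9)
  have s8 := gstar (m+8)
  have s7 := gstar (m+7)
  rw [if_pos (by omega : m+10 ≠ 1 ∧ m+10 ≠ 3),
    show m+10-2 = m+8 from by omega, show m+10-7 = m+3 from by omega] at s10
  rw [if_pos (by omega : m+9 ≠ 1 ∧ m+9 ≠ 3),
    show m+9-2 = m+7 from by omega, show m+9-7 = m+2 from by omega] at s9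
  rw [if_pos (by omega : m+8 ≠ 1 ∧ m+8 ≠ 3),
    show m+8-2 = m+6 from by omega, show m+8-7 = m+1 from by omega] at s8
  rw [if_pos (by omega : m+7 ≠ 1 ∧ m+7 ≠ 3),
    show m+7-2 = m+5 from by omega, show m+7-7 = m from by omega] at s7
  have q1 := G21_succ (m+7)
  have q2 := G21_succ (m+2)
  have q3 := G21_succ (m+5)
  have q4 := G21_succ m
  rw [show m+7+1 = m+8 from by omega] at q1
  rw [show m+2+1 = m+3 from by omega] at q2
  rw [show m+5+1 = m+6 from by omega] at q3
  have r1 := G2_succ2 (m+5)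
  have r2 := G2_succ2 m
  rw [show m+5+2 = m+7 from by omega] at r1
  omega

/-- the order-7 recurrence, in ℕ form. -/
lemma Rall : ∀ m : ℕ,
    g (m+7) + g (m+5) + g (m+3) + g (m+1) = 2 * g (m+6) + g (m+4) + g (m+2) + g m
  | 0 => by rw [gv7, gv5, gv3, gv1, gv6, gv4, gv2, gv0]
  | 1 => by rw [gv8, gv6, gv4, gv2, gv7, gv5, gv3, gv1]
  | 2 => by rw [gv9, gv7, gv5, gv3, gv8, gv6, gv4, gv2]
  | (m+3) => by
    have h1 := Rall (m+2)
    have h2 := A8 m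
    rw [show m+2+7 = m+9 from by omega, show m+2+5 = m+7 from by omega,
      show m+2+3 = m+5 from by omega, show m+2+1 = m+3 from by omega,
      show m+2+6 = m+8 from by omega, show m+2+4 = m+6 from by omega,
      show m+2+2 = m+4 from by omega] at h1
    rw [show m+3+7 = m+10 from by omega, show m+3+5 = m+8 from by omega,
      show m+3+3 = m+6 from by omega, show m+3+1 = m+4 from by omega,
      show m+3+6 = m+9 from by omega, show m+3+4 = m+7 from by omega,
      show m+3+2 = m+5 from by omega]
    omega

/-- The number `i n` of UC-equivalence classes of paths of length `n` in ℰ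
satisfies `i 0 = 1`, `i 1 = 0`, `i 2 = 1`, `i 3 = 1`, `i 4 = 2`, `i 5 = 4`,
`i 6 = 5` and `i n = 2 i(n-1) - i(n-2) + i(n-3) - i(n-4) + i(n-5) - i(n-6) + i(n-7)`
for `n ≥ 7`. -/
theorem count_UCEquiv_classes :
    nClasses UCEquiv 0 = 1 ∧ nClasses UCEquiv 1 = 0 ∧ nClasses UCEquiv 2 = 1 ∧
    nClasses UCEquiv 3 = 1 ∧ nClasses UCEquiv 4 = 2 ∧ nClasses UCEquiv 5 = 4 ∧
    nClasses UCEquiv 6 = 5 ∧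
    ∀ n, 7 ≤ n → (nClasses UCEquiv n : ℤ) =
      2 * nClasses UCEquiv (n - 1) - nClasses UCEquiv (n - 2) + nClasses UCEquiv (n - 3)
        - nClasses UCEquiv (n - 4) + nClasses UCEquiv (n - 5) - nClasses UCEquiv (n - 6)
        + nClasses UCEquiv (n - 7) := by
  refine ⟨(nClasses_eq_g 0).trans gv0, (nClasses_eq_g 1).trans gv1,
    (nClasses_eq_g 2).trans gv2, (nClasses_eq_g 3).trans gv3,
    (nClasses_eq_g 4).trans gv4, (nClasses_eq_g 5).trans gv5,
    (nClasses_eq_g 6).trans gv6, ?_⟩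
  intro n hn
  obtain ⟨m, rfl⟩ : ∃ m, n = m + 7 := ⟨n - 7, by omega⟩
  simp only [nClasses_eq_g]
  rw [show m+7-1 = m+6 from by omega, show m+7-2 = m+5 from by omega,
    show m+7-3 = m+4 from by omega, show m+7-4 = m+3 from by omega,
    show m+7-5 = m+2 from by omega, show m+7-6 = m+1 from by omega,
    show m+7-7 = m from by omega]
  have h := Rall m
  omega
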